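/- Let Σ be a polyhedral complex in R^n compatible with a fan Δ, refined so that the recession cone of every face of Σ is a cone of Δ. Fix τ ∈ Δ and let π : R^n → R^n/span(τ) be the projection. Then the map σ ↦ π(σ) is a bijection between the faces of Σ whose recession cone contains τ and the faces of the projected complex π({σ ∈ Σ : τ ⊆ ρ(σ)}); moreover this bijection preserves codimension. -/

import Mathlib

open Pointwise

/-- The recession cone of a set `S`. -/
def recCone {V : Type*} [AddCommGroup V] [Module ℝ V] (S : Set V) : Set V :=
  {v | ∀ x ∈ S, ∀ t : ℝ, 0 ≤ t → x + t • v ∈ S}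

/-- For a convex cone `τ` containing `0`, the span of `τ` is contained in `τ - τ`. -/
lemma span_cone_subset_sub {V : Type*} [AddCommGroup V] [Module ℝ V] (τ : Set V)
    (hconv : Convex ℝ τ) (h0 : (0 : V) ∈ τ)
    (hcone : ∀ v ∈ τ, ∀ t : ℝ, 0 ≤ t → t • v ∈ τ) :
    (Submodule.span ℝ τ : Set V) ⊆ τ - τ := by
  have hadd : ∀ a ∈ τ, ∀ b ∈ τ, a + b ∈ τ := by
    intro a ha b hb
    have hmid : (1/2 : ℝ) • a + (1/2 : ℝ) • b ∈ τ := hconv ha hb (by norm_num) (by norm_num)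
      (by norm_num)
    have := hcone _ hmid 2 (by norm_num)
    have h2 : (2 : ℝ) • ((1/2 : ℝ) • a + (1/2 : ℝ) • b) = a + b := by
      rw [smul_add, smul_smul, smul_smul]; norm_num
    rwa [h2] at this
  let S : Submodule ℝ V :=
    { carrier := τ - τ
      zero_mem' := ⟨0, h0, 0, h0, by simp⟩
      add_mem' := by
        rintro _ _ ⟨a, ha, b, hb, rfl⟩ ⟨c, hc, d, hd, rfl⟩
        exact ⟨a + c, hadd a ha c hc, b + d, hadd b hb d hd, by beta_reduce; abel⟩
      smul_mem' := by
        rintro c _ ⟨a, ha, b, hb, rfl⟩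
        rcases le_or_gt 0 c with hc | hc
        · exact ⟨c • a, hcone a ha c hc, c • b, hcone b hb c hc, by rw [smul_sub]⟩
        · refine ⟨(-c) • b, hcone b hb (-c) (by linarith), (-c) • a,
            hcone a ha (-c) (by linarith), ?_⟩
          rw [smul_sub, neg_smul, neg_smul]; abel }
  have : Submodule.span ℝ τ ≤ S := Submodule.span_le.mpr (fun v hv => ⟨v, hv, 0, h0, by simp⟩)
  exact this

set_option synthInstance.maxHeartbeats 1000000 in
set_option maxHeartbeats 1000000 in
/-- let `Sc` be a polyhedral complex compatible with a fan `Δ`,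
refined so that the recession cone of every face lies in `Δ`, and let `τ ∈ Δ`.
Then `σ ↦ π(σ)` (with `π : ℝⁿ → ℝⁿ/span(τ)` the projection) is injective on the
faces of `Sc` whose recession cone contains `τ` — hence a bijection onto the
faces of the projected complex — and it preserves codimension:
`dim π(σ) + dim span(τ) = dim σ`. -/
theorem projection_face_bijection (n : ℕ)
    (Δ Sc : Finset (Set (Fin n → ℝ))) (τ : Set (Fin n → ℝ)) (hτΔ : τ ∈ Δ)
    (hΔcone : ∀ δ ∈ Δ, Convex ℝ δ ∧ (0 : Fin n → ℝ) ∈ δ ∧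
        ∀ v ∈ δ, ∀ t : ℝ, 0 ≤ t → t • v ∈ δ)
    (hpoly : ∀ σ ∈ Sc, σ.Nonempty ∧ ∃ (r : ℕ) (u : Fin r → Fin n → ℝ)
        (b : Fin r → ℝ), σ = {x | ∀ i, b i ≤ ∑ j, x j * u i j})
    (hrec : ∀ σ ∈ Sc, recCone σ ∈ Δ)
    (hface : ∀ σ₁ ∈ Sc, ∀ σ₂ ∈ Sc, (σ₁ ∩ σ₂).Nonempty →
        IsExposed ℝ σ₁ (σ₁ ∩ σ₂) ∧ IsExposed ℝ σ₂ (σ₁ ∩ σ₂)) :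
    Set.InjOn (fun σ => (Submodule.span ℝ τ).mkQ '' σ)
        {σ | σ ∈ Sc ∧ τ ⊆ recCone σ} ∧
    ∀ σ ∈ Sc, τ ⊆ recCone σ →
      Module.finrank ℝ (Submodule.span ℝ
          ((Submodule.span ℝ τ).mkQ '' σ - (Submodule.span ℝ τ).mkQ '' σ))
        + Module.finrank ℝ (Submodule.span ℝ τ)
        = Module.finrank ℝ (Submodule.span ℝ (σ - σ)) := by
  obtain ⟨hτconv, hτ0, hτcone⟩ := hΔcone τ hτΔ
  set T := Submodule.span ℝ τ with hT
  have hspan_sub : (T : Set (Fin n → ℝ)) ⊆ τ - τ :=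
    span_cone_subset_sub τ hτconv hτ0 hτcone
  -- key: one-sided injectivity
  have key : ∀ σ₁ ∈ Sc, ∀ σ₂ ∈ Sc, τ ⊆ recCone σ₁ → τ ⊆ recCone σ₂ →
      T.mkQ '' σ₁ = T.mkQ '' σ₂ → σ₁ ⊆ σ₂ := by
    intro σ₁ h1 σ₂ h2 ht1 ht2 heq x hx
    have hximg : T.mkQ x ∈ T.mkQ '' σ₂ := heq ▸ ⟨x, hx, rfl⟩
    obtain ⟨y, hy, hxy⟩ := hximg
    have hker : x - y ∈ T := by
      rw [← Submodule.ker_mkQ T, LinearMap.mem_ker, map_sub, hxy, sub_self]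
    obtain ⟨a, ha, b, hb, hab⟩ := hspan_sub hker
    -- x + b = y + a
    have hz : x + b = y + a := by
      have h' : x - y = a - b := hab.symm
      have := sub_eq_sub_iff_add_eq_add.mp h'
      rw [this]; abel
    have hzb1 : x + b ∈ σ₁ := by
      have := ht1 hb x hx 1 zero_le_one
      rwa [one_smul] at this
    have hzb2 : x + b ∈ σ₂ := by
      have := ht2 ha y hy 1 zero_le_one
      rw [one_smul] at this; rwa [hz]
    have hne : (σ₁ ∩ σ₂).Nonempty := ⟨x + b, hzb1, hzb2⟩
    obtain ⟨hexp, -⟩ := hface σ₁ h1 σ₂ h2 hne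
    obtain ⟨l, hl⟩ := hexp hne
    have hzmem : x + b ∈ {x ∈ σ₁ | ∀ y ∈ σ₁, l y ≤ l x} := hl ▸ ⟨hzb1, hzb2⟩
    have hlb : l b ≤ 0 := by
      have hx2b : x + (2 : ℝ) • b ∈ σ₁ := ht1 hb x hx 2 (by norm_num)
      have := hzmem.2 _ hx2b
      simp only [map_add, map_smul, smul_eq_mul] at this
      linarith
    have hxmem : x ∈ {x ∈ σ₁ | ∀ y ∈ σ₁, l y ≤ l x} := by
      refine ⟨hx, fun y' hy' => ?_⟩
      have := hzmem.2 y' hy'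
      simp only [map_add] at this
      linarith
    rw [← hl] at hxmem
    exact hxmem.2
  constructor
  · rintro σ₁ ⟨h1, ht1⟩ σ₂ ⟨h2, ht2⟩ heq
    exact Set.Subset.antisymm (key σ₁ h1 σ₂ h2 ht1 ht2 heq)
      (key σ₂ h2 σ₁ h1 ht2 ht1 heq.symm)
  · intro σ hσ hτσ
    obtain ⟨⟨x₀, hx₀⟩, -⟩ := hpoly σ hσ
    set W := Submodule.span ℝ (σ - σ) with hW
    have hτsub : τ ⊆ σ - σ := by
      intro v hv
      have := hτσ hv x₀ hx₀ 1 zero_le_one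
      rw [one_smul] at this
      exact ⟨x₀ + v, this, x₀, hx₀, add_sub_cancel_left x₀ v⟩
    have hTW : T ≤ W := Submodule.span_le.mpr
      (fun v hv => Submodule.subset_span (hτsub hv))
    -- image of the difference set
    have himg : T.mkQ '' σ - T.mkQ '' σ = T.mkQ '' (σ - σ) :=
      (Set.image_sub (T.mkQ.toAddMonoidHom) ..).symm
    have hspanmap : Submodule.span ℝ (T.mkQ '' (σ - σ)) = Submodule.map T.mkQ W := by
      rw [hW, Submodule.span_image]
    -- rank-nullity for mkQ restricted to W
    let f : W →ₗ[ℝ] (Fin n → ℝ) ⧸ T := T.mkQ.comp W.subtype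
    have hrange : LinearMap.range f = Submodule.map T.mkQ W := by
      rw [LinearMap.range_comp, Submodule.range_subtype]
    have hkerf : LinearMap.ker f = Submodule.comap W.subtype T := by
      rw [LinearMap.ker_comp, Submodule.ker_mkQ]
    have hkerrank : Module.finrank ℝ (LinearMap.ker f) = Module.finrank ℝ T := by
      rw [hkerf]
      exact (Submodule.comapSubtypeEquivOfLe hTW).finrank_eq
    have hrn := LinearMap.finrank_range_add_finrank_ker f
    rw [hrange, hkerrank] at hrn
    rw [himg, hspanmap]
    exact hrn
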